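/- Let V be a real Hilbert space, V_h ⊆ V a complete subspace (for instance finite-dimensional), U a real normed space, B : U → V* a continuous linear map, and L ∈ V*. Define the discrete trial-to-test operator Θ_h : U → V_h by ⟨Θ_h w, v_h⟩ = (B w)(v_h) for all v_h ∈ V_h (Riesz representation on V_h). Then the function J_lin : U → ℝ, J_lin(w) := ‖B w − L‖_{V_h*}² where ‖F‖_{V_h*} := sup{|F(v_h)| : v_h ∈ V_h, ‖v_h‖ ≤ 1}, is Fréchet differentiable, and its derivative at u ∈ U is the continuous linear functional w ↦ 2 ((B u)(Θ_h w) − L(Θ_h w)). (This identity yields the linear part of the Euler–Lagrange equations (4.2) of the discrete minimum residual method.) -/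

import Mathlib

/-- differentiability of the discrete linear residual, giving the
linear part of the Euler–Lagrange equations (4.2).  Let `V` be a real Hilbert space,
`V_h ⊆ V` a complete subspace, `U` a real normed space, `B : U → V*` continuous
linear, `L ∈ V*`, and `Θ_h : U → V_h` the discrete trial-to-test operator defined by
`⟨Θ_h w, v_h⟩ = (B w)(v_h)` for all `v_h ∈ V_h`.  Then
`J_lin (w) := ‖B w − L‖_{V_h*}²` (with `‖F‖_{V_h*}` the operator norm of the
restriction of `F` to `V_h`) is Fréchet differentiable and its derivative at `u` is
the continuous linear functional `w ↦ 2 ((B u)(Θ_h w) − L (Θ_h w))`. -/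
theorem stmt_5
    {U V : Type*}
    [NormedAddCommGroup U] [NormedSpace ℝ U]
    [NormedAddCommGroup V] [InnerProductSpace ℝ V]
    (Vh : Submodule ℝ V) [CompleteSpace Vh]
    (B : U →L[ℝ] (V →L[ℝ] ℝ)) (L : V →L[ℝ] ℝ)
    (Θh : U → V) (hmem : ∀ w : U, Θh w ∈ Vh)
    (hΘ : ∀ (w : U), ∀ v ∈ Vh, (inner ℝ (Θh w) v : ℝ) = B w v) :
    ∀ u : U, ∃ D : U →L[ℝ] ℝ,
      (∀ w : U, D w = 2 * ((B u) (Θh w) - L (Θh w))) ∧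
      HasFDerivAt (fun w : U => ‖(B w - L).comp Vh.subtypeL‖ ^ 2) D u := by
  intro u
  set ι := Vh.subtypeL with hι
  let e := (InnerProductSpace.toDual ℝ Vh).symm
  let A : U →L[ℝ] Vh :=
    ((InnerProductSpace.toDual ℝ Vh).symm.toContinuousLinearEquiv :
        (Vh →L[ℝ] ℝ) ≃L[ℝ] Vh).toContinuousLinearMap.comp
      (((ContinuousLinearMap.compL ℝ Vh V ℝ).flip ι).comp B)
  let c : Vh := e (L.comp ι)
  have hinnerc : ∀ y : Vh, (inner ℝ c y : ℝ) = L y :=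
    fun y => InnerProductSpace.toDual_symm_apply
  have hA : ∀ w : U, A w = ⟨Θh w, hmem w⟩ := by
    intro w
    apply ext_inner_right ℝ
    intro y
    have : (inner ℝ (A w) y : ℝ) = ((B w).comp ι) y :=
      InnerProductSpace.toDual_symm_apply
    rw [this]
    rw [Submodule.coe_inner]
    exact (hΘ w y y.2).symm
  have hinnerA : ∀ w : U, ∀ y : Vh, (inner ℝ (A w) y : ℝ) = B w y :=
    fun w y => InnerProductSpace.toDual_symm_apply
  let f : U → Vh := fun w => A w - c
  have hfd : HasFDerivAt f A u := (A.hasFDerivAt).sub_const c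
  have hkey : ∀ w : U, ‖(B w - L).comp ι‖ ^ 2 = (inner ℝ (f w) (f w) : ℝ) := by
    intro w
    have h1 : (InnerProductSpace.toDual ℝ Vh) (f w) = (B w - L).comp ι := by
      apply ContinuousLinearMap.ext
      intro y
      rw [InnerProductSpace.toDual_apply_apply]
      show (inner ℝ (A w - c) y : ℝ) = _
      rw [inner_sub_left, hinnerA, hinnerc]
      simp [ι]
    rw [real_inner_self_eq_norm_sq, ← h1]
    rw [(InnerProductSpace.toDual ℝ Vh).norm_map]
  have hJ : HasFDerivAt (fun w : U => ‖(B w - L).comp ι‖ ^ 2)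
      ((fderivInnerCLM ℝ (f u, f u)).comp (A.prod A)) u := by
    have := (hfd.inner ℝ hfd)
    exact this.congr_of_eventuallyEq (Filter.Eventually.of_forall fun w => (hkey w))
  refine ⟨_, ?_, hJ⟩
  intro w
  have : (fderivInnerCLM ℝ ((f u), (f u))).comp (A.prod A) w
      = (inner ℝ (f u) (A w) : ℝ) + inner ℝ (A w) (f u) := by
    simp [fderivInnerCLM_apply]
  rw [ContinuousLinearMap.comp_apply] at this ⊢
  have h2 : (inner ℝ (f u) (A w) : ℝ) = B u (Θh w) - L (Θh w) := by
    show (inner ℝ (A u - c) (A w) : ℝ) = _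
    rw [inner_sub_left, hinnerc, hA w]
    have := hinnerA u ⟨Θh w, hmem w⟩
    rw [this]
  have h3 : (inner ℝ (A w) (f u) : ℝ) = B u (Θh w) - L (Θh w) := by
    rw [← h2]; exact real_inner_comm _ _
  rw [this, h2, h3]
  ring
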